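/- In the discrete lm-SCM for the motivating example (Figure 1c), under Positivity, the natural interventional mean in the context R = 0 is recovered by adjusting only for W: for every a ∈ {0,1}, E[Y₁ᵃ | R = 0] = Σ_{w ∈ 𝒲} μ(W = w | R = 0) · Q₀(w, a), where Q₀(w, a) := E[Y₁ | W = w, A = a, R = 0]. -/

import Mathlib

open MeasureTheory ProbabilityTheory
open scoped ENNReal NNReal

lemma aux_indepFun {Ω : Type*} {mΩ : MeasurableSpace Ω} {μ : Measure Ω}
    {M1 M2 : MeasurableSpace Ω} (h : Indep M1 M2 μ)
    {β γ : Type*} [MeasurableSpace β] [MeasurableSpace γ] {X : Ω → β} {Y : Ω → γ}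
    (hX : Measurable[M1] X) (hY : Measurable[M2] Y) : IndepFun X Y μ :=
  indep_of_indep_of_le_left (indep_of_indep_of_le_right h hY.comap_le) hX.comap_le

lemma aux_indicator_one_meas {Ω : Type*} {M : MeasurableSpace Ω} {s : Set Ω}
    (hs : MeasurableSet[M] s) : Measurable[M] (s.indicator (1 : Ω → ℝ)) :=
  measurable_one.indicator hs

lemma aux_indicator_one_meas' {Ω : Type*} {M : MeasurableSpace Ω} {s : Set Ω}
    (hs : MeasurableSet[M] s) : Measurable[M] (s.indicator (1 : Ω → ℝ≥0∞)) :=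
  measurable_one.indicator hs

lemma aux_nnnorm_meas {Ω : Type*} {M : MeasurableSpace Ω} {f : Ω → ℝ}
    (hf : Measurable[M] f) : Measurable[M] (fun ω => (‖f ω‖₊ : ℝ≥0∞)) :=
  hf.nnnorm.coe_nnreal_ennreal

lemma aux_comap_meas {Ω β γ : Type*} [MeasurableSpace β] [MeasurableSpace γ]
    (U : Ω → β) {φ : β → γ} (hφ : Measurable φ) :
    Measurable[MeasurableSpace.comap U inferInstance] (fun ω => φ (U ω)) :=
  hφ.comp (comap_measurable U)

lemma ind_integrable {Ω : Type*} {mΩ : MeasurableSpace Ω} {μ : Measure Ω}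
    {s : Set Ω} (hsm : MeasurableSet s) (hμs : μ s ≠ 0)
    {f : Ω → ℝ} (hf : Measurable f)
    (hind : IndepFun (s.indicator (1 : Ω → ℝ≥0∞)) (fun ω => (‖f ω‖₊ : ℝ≥0∞)) μ)
    (hfin : ∫⁻ ω in s, (‖f ω‖₊ : ℝ≥0∞) ∂μ ≠ ⊤) : Integrable f μ := by
  set X : Ω → ℝ≥0∞ := s.indicator 1 with hX
  set Y : Ω → ℝ≥0∞ := fun ω => (‖f ω‖₊ : ℝ≥0∞) with hY
  have hYm : Measurable Y := hf.nnnorm.coe_nnreal_ennreal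
  have hmul := lintegral_mul_eq_lintegral_mul_lintegral_of_indepFun
    (measurable_one.indicator hsm) hYm hind
  have hXY : X * Y = s.indicator Y := by
    funext ω; by_cases hω : ω ∈ s <;>
      simp [hX, Set.indicator_of_mem, Set.indicator_of_notMem, hω]
  have hXint : ∫⁻ ω, X ω ∂μ = μ s := lintegral_indicator_one hsm
  rw [hXY, lintegral_indicator hsm, hXint] at hmul
  have hYfin : ∫⁻ ω, Y ω ∂μ ≠ ⊤ := by
    intro htop
    rw [htop, ENNReal.mul_top hμs] at hmul
    exact hfin hmul
  exact ⟨hf.aestronglyMeasurable, lt_top_iff_ne_top.2 hYfin⟩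

lemma ind_setIntegral {Ω : Type*} {mΩ : MeasurableSpace Ω} {μ : Measure Ω} [IsFiniteMeasure μ]
    {s : Set Ω} (hsm : MeasurableSet s) {f : Ω → ℝ}
    (hind : IndepFun (s.indicator (1 : Ω → ℝ)) f μ) (hfi : Integrable f μ) :
    ∫ ω in s, f ω ∂μ = (μ s).toReal * ∫ ω, f ω ∂μ := by
  have hXi : Integrable (s.indicator (1 : Ω → ℝ)) μ :=
    Integrable.indicator (integrable_const 1) hsm
  have hmul := hind.integral_mul_eq_mul_integral hXi.aestronglyMeasurable hfi.aestronglyMeasurable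
  have hXY : s.indicator (1 : Ω → ℝ) * f = s.indicator f := by
    funext ω; by_cases hω : ω ∈ s <;>
      simp [Set.indicator_of_mem, Set.indicator_of_notMem, hω]
  have hXint : ∫ ω, s.indicator (1 : Ω → ℝ) ω ∂μ = (μ s).toReal := by
    rw [MeasureTheory.integral_indicator hsm]; simp [Measure.real]
  rw [hXY, hXint] at hmul
  rw [← MeasureTheory.integral_indicator hsm, hmul]

lemma aux_le_meas {Ω : Type*} {m m' : MeasurableSpace Ω} (h : m ≤ m') {s : Set Ω}
    (hs : MeasurableSet[m] s) : MeasurableSet[m'] s := h _ hs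

/-- Conditional probability of `S` given the event `E`: `μ(S ∩ E) / μ(E)`. -/
noncomputable def cprob {Ω : Type*} [MeasurableSpace Ω] (μ : Measure Ω) (S E : Set Ω) : ENNReal :=
  μ (S ∩ E) / μ E

/-- Conditional expectation of `X` given the event `E`: `μ(E)⁻¹ * ∫_E X dμ`. -/
noncomputable def cexp {Ω : Type*} [MeasurableSpace Ω] (μ : Measure Ω) (X : Ω → ℝ) (E : Set Ω) : ℝ :=
  ((μ E).toReal)⁻¹ * ∫ ω in E, X ω ∂μ
/-- In the discrete lm-SCM of Figure 1c, under positivity, the natural interventional mean in the context `R = 0` is recovered by adjusting only for `W`. -/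
theorem lmSCM_natural_mean_context0
    {Ω 𝒲 𝒴₀ 𝒰₀ 𝒰R 𝒰A 𝒰Y : Type*}
    [MeasurableSpace Ω]
    [Fintype 𝒲] [Nonempty 𝒲] [MeasurableSpace 𝒲] [MeasurableSingletonClass 𝒲]
    [Fintype 𝒴₀] [Nonempty 𝒴₀] [MeasurableSpace 𝒴₀] [MeasurableSingletonClass 𝒴₀]
    [MeasurableSpace 𝒰₀] [MeasurableSpace 𝒰R] [MeasurableSpace 𝒰A] [MeasurableSpace 𝒰Y]
    (μ : Measure Ω) [IsProbabilityMeasure μ]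
    (W : Ω → 𝒲) (U₀ : Ω → 𝒰₀) (UR : Ω → 𝒰R) (UA : Ω → 𝒰A) (UY : Ω → 𝒰Y)
    (hW : Measurable W) (hU₀ : Measurable U₀) (hUR : Measurable UR)
    (hUA : Measurable UA) (hUY : Measurable UY)
    (hIndep : iIndep
      (![MeasurableSpace.comap W inferInstance, MeasurableSpace.comap U₀ inferInstance,
         MeasurableSpace.comap UR inferInstance, MeasurableSpace.comap UA inferInstance,
         MeasurableSpace.comap UY inferInstance] : Fin 5 → MeasurableSpace Ω) μ)
    (f₀ : 𝒲 × 𝒰₀ → 𝒴₀) (hf₀ : Measurable f₀)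
    (fR : 𝒲 × 𝒰R → Fin 2) (hfR : Measurable fR)
    (fA : 𝒲 × 𝒴₀ × 𝒰A → Fin 2) (hfA : Measurable fA)
    (gA : 𝒲 × 𝒰A → Fin 2) (hgA : Measurable gA)
    (fY : 𝒲 × 𝒴₀ × Fin 2 × 𝒰Y → ℝ) (hfY : Measurable fY)
    (gY : 𝒲 × Fin 2 × 𝒰Y → ℝ) (hgY : Measurable gY)
    (Y₀ : Ω → 𝒴₀) (R A : Ω → Fin 2) (Y₁ : Ω → ℝ)
    (hY₀ : ∀ ω, Y₀ ω = f₀ (W ω, U₀ ω))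
    (hR : ∀ ω, R ω = fR (W ω, UR ω))
    (hA : ∀ ω, A ω = if R ω = 1 then fA (W ω, Y₀ ω, UA ω) else gA (W ω, UA ω))
    (hY₁ : ∀ ω, Y₁ ω = if R ω = 1 then fY (W ω, Y₀ ω, A ω, UY ω) else gY (W ω, A ω, UY ω))
    (Ynat : Fin 2 → Ω → ℝ)
    (hYnat : ∀ (a : Fin 2) (ω : Ω),
      Ynat a ω = if R ω = 1 then fY (W ω, Y₀ ω, a, UY ω) else gY (W ω, a, UY ω))
    (Yful : Fin 2 → Ω → ℝ)
    (hYful : ∀ (a : Fin 2) (ω : Ω), Yful a ω = fY (W ω, Y₀ ω, a, UY ω))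
    (hIntY₁ : Integrable Y₁ μ)
    (hIntN0 : Integrable (Ynat 0) μ) (hIntN1 : Integrable (Ynat 1) μ)
    (hIntF0 : Integrable (Yful 0) μ) (hIntF1 : Integrable (Yful 1) μ)
    (hpos : ∀ (w : 𝒲) (y : 𝒴₀) (r a : Fin 2),
      0 < μ {ω | W ω = w ∧ Y₀ ω = y ∧ R ω = r ∧ A ω = a})
    (Q1 : 𝒲 → 𝒴₀ → Fin 2 → ℝ)
    (hQ1 : ∀ (w : 𝒲) (y : 𝒴₀) (a : Fin 2),
      Q1 w y a = cexp μ Y₁ {ω | W ω = w ∧ Y₀ ω = y ∧ A ω = a ∧ R ω = 1})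
    (Q0 : 𝒲 → Fin 2 → ℝ)
    (hQ0 : ∀ (w : 𝒲) (a : Fin 2), Q0 w a = cexp μ Y₁ {ω | W ω = w ∧ A ω = a ∧ R ω = 0})
    :
    ∀ a : Fin 2,
      cexp μ (Ynat a) {ω | R ω = 0}
        = ∑ w : 𝒲, (cprob μ {ω | W ω = w} {ω | R ω = 0}).toReal * Q0 w a := by

  classical
  intro a
  obtain ⟨y⟩ := (inferInstance : Nonempty 𝒴₀)
  have hIntNa : Integrable (Ynat a) μ := by fin_cases a <;> [exact hIntN0; exact hIntN1]
  have hRmeas : Measurable R := by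
    have hfun : R = fun ω => fR (W ω, UR ω) := funext hR
    rw [hfun]; exact hfR.comp (hW.prodMk hUR)
  have hEm : MeasurableSet {ω | R ω = 0} := hRmeas (measurableSet_singleton 0)
  have hle : ∀ i, (![MeasurableSpace.comap W inferInstance, MeasurableSpace.comap U₀ inferInstance,
         MeasurableSpace.comap UR inferInstance, MeasurableSpace.comap UA inferInstance,
         MeasurableSpace.comap UY inferInstance] : Fin 5 → MeasurableSpace Ω) i
       ≤ (inferInstance : MeasurableSpace Ω) := by
    intro i; fin_cases i
    exacts [hW.comap_le, hU₀.comap_le, hUR.comap_le, hUA.comap_le, hUY.comap_le]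
  have hIndepM : Indep
      (⨆ i ∈ ({0,2,3} : Set (Fin 5)),
        (![MeasurableSpace.comap W inferInstance, MeasurableSpace.comap U₀ inferInstance,
         MeasurableSpace.comap UR inferInstance, MeasurableSpace.comap UA inferInstance,
         MeasurableSpace.comap UY inferInstance] : Fin 5 → MeasurableSpace Ω) i)
      (MeasurableSpace.comap UY inferInstance) μ := by
    have h := indep_iSup_of_disjoint (μ := μ) hle hIndep
      (S := ({0,2,3} : Set (Fin 5))) (T := ({4} : Set (Fin 5)))
      (by simp [Set.disjoint_left])
    refine indep_of_indep_of_le_right h ?_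
    have h4 : (![MeasurableSpace.comap W inferInstance, MeasurableSpace.comap U₀ inferInstance,
         MeasurableSpace.comap UR inferInstance, MeasurableSpace.comap UA inferInstance,
         MeasurableSpace.comap UY inferInstance] : Fin 5 → MeasurableSpace Ω) 4
        = MeasurableSpace.comap UY inferInstance := rfl
    rw [← h4]
    exact le_biSup _ (by simp)
  have main : ∀ w : 𝒲,
      ∫ ω in ({ω | W ω = w} ∩ {ω | R ω = 0}), Ynat a ω ∂μ
        = (μ ({ω | W ω = w} ∩ {ω | R ω = 0})).toReal * Q0 w a := by
    intro w
    set B : Set Ω := W ⁻¹' {w} with hB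
    set C : Set Ω := UR ⁻¹' {u | fR (w, u) = 0} with hC
    set D : Set Ω := UA ⁻¹' {u | gA (w, u) = a} with hD
    set g : Ω → ℝ := fun ω => gY (w, a, UY ω) with hg
    have hBc : MeasurableSet[MeasurableSpace.comap W inferInstance] B :=
      ⟨{w}, measurableSet_singleton w, rfl⟩
    have hCc : MeasurableSet[MeasurableSpace.comap UR inferInstance] C :=
      ⟨{u | fR (w, u) = 0},
        (hfR.comp (measurable_const.prodMk measurable_id)) (measurableSet_singleton 0), rfl⟩
    have hDc : MeasurableSet[MeasurableSpace.comap UA inferInstance] D :=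
      ⟨{u | gA (w, u) = a},
        (hgA.comp (measurable_const.prodMk measurable_id)) (measurableSet_singleton a), rfl⟩
    have hB1 : MeasurableSet[⨆ i ∈ ({0,2,3} : Set (Fin 5)),
        (![MeasurableSpace.comap W inferInstance, MeasurableSpace.comap U₀ inferInstance,
         MeasurableSpace.comap UR inferInstance, MeasurableSpace.comap UA inferInstance,
         MeasurableSpace.comap UY inferInstance] : Fin 5 → MeasurableSpace Ω) i] B :=
      aux_le_meas (le_biSup _ (show (0 : Fin 5) ∈ ({0,2,3} : Set (Fin 5)) by simp)) hBc
    have hC1 : MeasurableSet[⨆ i ∈ ({0,2,3} : Set (Fin 5)),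
        (![MeasurableSpace.comap W inferInstance, MeasurableSpace.comap U₀ inferInstance,
         MeasurableSpace.comap UR inferInstance, MeasurableSpace.comap UA inferInstance,
         MeasurableSpace.comap UY inferInstance] : Fin 5 → MeasurableSpace Ω) i] C :=
      aux_le_meas (le_biSup _ (show (2 : Fin 5) ∈ ({0,2,3} : Set (Fin 5)) by simp)) hCc
    have hD1 : MeasurableSet[⨆ i ∈ ({0,2,3} : Set (Fin 5)),
        (![MeasurableSpace.comap W inferInstance, MeasurableSpace.comap U₀ inferInstance,
         MeasurableSpace.comap UR inferInstance, MeasurableSpace.comap UA inferInstance,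
         MeasurableSpace.comap UY inferInstance] : Fin 5 → MeasurableSpace Ω) i] D :=
      aux_le_meas (le_biSup _ (show (3 : Fin 5) ∈ ({0,2,3} : Set (Fin 5)) by simp)) hDc
    have hg4 : Measurable[MeasurableSpace.comap UY inferInstance] g :=
      aux_comap_meas UY (hgY.comp (measurable_const.prodMk (measurable_const.prodMk measurable_id)))
    have hgmeas : Measurable g :=
      hgY.comp (measurable_const.prodMk (measurable_const.prodMk hUY))
    have hsmBC : MeasurableSet (B ∩ C) :=
      aux_le_meas (iSup₂_le fun i _ => hle i) (hB1.inter hC1)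
    have hsmBCD : MeasurableSet (B ∩ C ∩ D) :=
      aux_le_meas (iSup₂_le fun i _ => hle i) ((hB1.inter hC1).inter hD1)
    -- set identities
    have hBC : {ω | W ω = w} ∩ {ω | R ω = 0} = B ∩ C := by
      ext ω
      simp only [Set.mem_inter_iff, Set.mem_setOf_eq, hB, hC, Set.mem_preimage,
        Set.mem_singleton_iff]
      constructor
      · rintro ⟨h1, h2⟩; rw [hR ω, h1] at h2; exact ⟨h1, h2⟩
      · rintro ⟨h1, h2⟩; refine ⟨h1, ?_⟩; rw [hR ω, h1]; exact h2
    have hBCD : {ω | W ω = w ∧ A ω = a ∧ R ω = 0} = B ∩ C ∩ D := by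
      ext ω
      simp only [Set.mem_inter_iff, Set.mem_setOf_eq, hB, hC, hD, Set.mem_preimage,
        Set.mem_singleton_iff]
      constructor
      · rintro ⟨h1, h2, h3⟩
        have hC' : fR (w, UR ω) = 0 := by rw [← h1, ← hR ω]; exact h3
        have hR1 : R ω ≠ 1 := by rw [h3]; decide
        have hA' : A ω = gA (W ω, UA ω) := by rw [hA ω, if_neg hR1]
        exact ⟨⟨h1, hC'⟩, by rw [← h1, ← hA', h2]⟩
      · rintro ⟨⟨h1, h2⟩, h3⟩
        have hR0 : R ω = 0 := by rw [hR ω, h1]; exact h2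
        have hR1 : R ω ≠ 1 := by rw [hR0]; decide
        refine ⟨h1, ?_, hR0⟩
        rw [hA ω, if_neg hR1, h1]; exact h3
    -- function identities
    have hYg : ∀ ω ∈ B ∩ C, Ynat a ω = g ω := by
      rintro ω ⟨h1, h2⟩
      rw [Set.mem_preimage, Set.mem_singleton_iff] at h1
      rw [Set.mem_preimage, Set.mem_setOf_eq] at h2
      have hR1 : R ω ≠ 1 := by rw [hR ω, h1, h2]; decide
      rw [hYnat a ω, if_neg hR1, h1]
    have hY1g : ∀ ω ∈ B ∩ C ∩ D, Y₁ ω = g ω := by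
      rintro ω ⟨⟨h1, h2⟩, h3⟩
      rw [Set.mem_preimage, Set.mem_singleton_iff] at h1
      rw [Set.mem_preimage, Set.mem_setOf_eq] at h2
      rw [Set.mem_preimage, Set.mem_setOf_eq] at h3
      have hR1 : R ω ≠ 1 := by rw [hR ω, h1, h2]; decide
      have hAa : A ω = a := by rw [hA ω, if_neg hR1, h1]; exact h3
      rw [hY₁ ω, if_neg hR1, h1, hAa]
    -- positivity
    have hpos3 : 0 < μ (B ∩ C ∩ D) := by
      rw [← hBCD]
      refine lt_of_lt_of_le (hpos w y 0 a) (measure_mono ?_)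
      rintro ω ⟨h1, _, h3, h4⟩
      exact ⟨h1, h4, h3⟩
    have hposBC : 0 < μ (B ∩ C) :=
      lt_of_lt_of_le hpos3 (measure_mono Set.inter_subset_left)
    -- integrability of g
    have hgInt : Integrable g μ := by
      refine ind_integrable hsmBC (ne_of_gt hposBC) hgmeas
        (aux_indepFun hIndepM (aux_indicator_one_meas' (hB1.inter hC1)) (aux_nnnorm_meas hg4)) ?_
      have hcongr : ∫⁻ ω in B ∩ C, (‖g ω‖₊ : ℝ≥0∞) ∂μ
          = ∫⁻ ω in B ∩ C, (‖Ynat a ω‖₊ : ℝ≥0∞) ∂μ := by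
        refine setLIntegral_congr_fun hsmBC (fun ω hω => ?_)
        rw [hYg ω hω]
      rw [hcongr]
      exact ne_of_lt (lt_of_le_of_lt (setLIntegral_le_lintegral _ _) hIntNa.2)
    -- key 1
    have hkey1 : ∫ ω in B ∩ C, Ynat a ω ∂μ = (μ (B ∩ C)).toReal * ∫ ω, g ω ∂μ := by
      rw [setIntegral_congr_fun hsmBC hYg]
      exact ind_setIntegral hsmBC
        (aux_indepFun hIndepM (aux_indicator_one_meas (hB1.inter hC1)) hg4) hgInt
    -- key 2
    have hkey2 : Q0 w a = ∫ ω, g ω ∂μ := by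
      have hx : (μ (B ∩ C ∩ D)).toReal ≠ 0 :=
        ENNReal.toReal_ne_zero.2 ⟨ne_of_gt hpos3, measure_ne_top μ _⟩
      rw [hQ0 w a]
      unfold cexp
      rw [hBCD, setIntegral_congr_fun hsmBCD hY1g,
        ind_setIntegral hsmBCD
          (aux_indepFun hIndepM (aux_indicator_one_meas ((hB1.inter hC1).inter hD1)) hg4) hgInt,
        inv_mul_cancel_left₀ hx]
    rw [hBC, hkey1, hkey2]
  -- partition of the event R = 0
  have hE_eq : {ω | R ω = 0} = ⋃ w : 𝒲, ({ω | W ω = w} ∩ {ω | R ω = 0}) := by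
    ext ω
    simp only [Set.mem_iUnion, Set.mem_inter_iff, Set.mem_setOf_eq]
    exact ⟨fun h => ⟨W ω, rfl, h⟩, fun ⟨w, _, h⟩ => h⟩
  have hslice_m : ∀ w : 𝒲, MeasurableSet ({ω | W ω = w} ∩ {ω | R ω = 0}) :=
    fun w => (hW (measurableSet_singleton w)).inter hEm
  have hdisj : Pairwise (Function.onFun Disjoint fun w : 𝒲 => {ω | W ω = w} ∩ {ω | R ω = 0}) := by
    intro w w' hne
    rw [Function.onFun, Set.disjoint_left]
    rintro ω ⟨h1, _⟩ ⟨h2, _⟩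
    exact hne (h1.symm.trans h2)
  have hsum : ∫ ω in {ω | R ω = 0}, Ynat a ω ∂μ
      = ∑ w : 𝒲, ∫ ω in ({ω | W ω = w} ∩ {ω | R ω = 0}), Ynat a ω ∂μ := by
    conv_lhs => rw [hE_eq]
    exact integral_iUnion_fintype hslice_m hdisj fun w => hIntNa.integrableOn
  unfold cexp cprob
  rw [hsum, Finset.mul_sum]
  refine Finset.sum_congr rfl fun w _ => ?_
  rw [main w, ENNReal.toReal_div]
  ring
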